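/- Let q ≥ 2 be an integer and 0 < ε₀ < (q−1)/2, and let m be an integer with m ≥ max{ 2q²−1, ((q−1)²/ε₀²)·ln(m−2) + 2 }. Let G^{(q)}(m+1,ε₀) be the set of sequences in Σ_q^{m+1} that contain at least one substring of length m whose L1-weight lies outside the interval [((q−1)/2 − ε₀)m, ((q−1)/2 + ε₀)m]. Then |G^{(q)}(m+1,ε₀)| ≤ q^{m−3}, and there exists an injective map from G^{(q)}(m+1,ε₀) into W^{(q)}(m−2, m−2, [p₁(ε₀)(m−2), p₂(ε₀)(m−2)]). -/

import Mathlib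

/-- The L1-weight of the length-`len` substring of `y` starting at 0-based position `a`. -/
def wsub {q m : ℕ} (y : Fin m → ZMod q) (a len : ℕ) (h : a + len ≤ m) : ℕ :=
  ∑ i : Fin len, (y ⟨a + (i : ℕ), by omega⟩).val

/-- `G^{(q)}(m+1,ε₀)`: sequences in `Σ_q^{m+1}` containing at least one substring of
length `m` whose L1-weight lies outside `[((q−1)/2 − ε₀)m, ((q−1)/2 + ε₀)m]`. -/
def Gset (q m : ℕ) (ε₀ : ℝ) : Set (Fin (m + 1) → ZMod q) :=
  {y | ∃ a : ℕ, ∃ h : a + m ≤ m + 1,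
    ¬((((q : ℝ) - 1) / 2 - ε₀) * (m : ℝ) ≤ (wsub y a m h : ℝ) ∧
      (wsub y a m h : ℝ) ≤ (((q : ℝ) - 1) / 2 + ε₀) * (m : ℝ))}

/-- `W^{(q)}(n,ℓ,[lo,hi])`: sequences in `Σ_q^n` in which every substring of length
exactly `ℓ` has L1-weight in `[lo,hi]`. -/
def Wset (q n ℓ : ℕ) (lo hi : ℝ) : Set (Fin n → ZMod q) :=
  {z | ∀ a : ℕ, ∀ h : a + ℓ ≤ n, lo ≤ (wsub z a ℓ h : ℝ) ∧ (wsub z a ℓ h : ℝ) ≤ hi}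

/-! ### Auxiliary definitions and lemmas -/

open Finset Real

/-- Total L1-weight of a sequence. -/
def Swt {q n : ℕ} (x : Fin n → ZMod q) : ℕ := ∑ i, ZMod.val (x i)

/-- The window of length `m` starting at position 0. -/
def win0 {q m : ℕ} (y : Fin (m+1) → ZMod q) : Fin m → ZMod q :=
  fun i => y ⟨i.1, by omega⟩

/-- The window of length `m` starting at position 1. -/
def win1 {q m : ℕ} (y : Fin (m+1) → ZMod q) : Fin m → ZMod q :=
  fun i => y ⟨i.1+1, by omega⟩

lemma wsub_eq_win0 {q m : ℕ} (y : Fin (m+1) → ZMod q) (h : 0 + m ≤ m+1) :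
    wsub y 0 m h = Swt (win0 y) := by
  unfold wsub Swt win0
  apply Finset.sum_congr rfl
  intro i _
  exact congrArg (fun z => ZMod.val (y z)) (Fin.ext (Nat.zero_add _))

lemma wsub_eq_win1 {q m : ℕ} (y : Fin (m+1) → ZMod q) (h : 1 + m ≤ m+1) :
    wsub y 1 m h = Swt (win1 y) := by
  unfold wsub Swt win1
  apply Finset.sum_congr rfl
  intro i _
  exact congrArg (fun z => ZMod.val (y z)) (Fin.ext (by simp [Nat.add_comm]))

lemma wsub_zero_full {q n : ℕ} (z : Fin n → ZMod q) (h : 0 + n ≤ n) :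
    wsub z 0 n h = Swt z := by
  unfold wsub Swt
  apply Finset.sum_congr rfl
  intro i _
  exact congrArg (fun w => ZMod.val (z w)) (Fin.ext (Nat.zero_add _))

lemma win0_pair_inj {q m : ℕ} {y y' : Fin (m+1) → ZMod q}
    (h1 : win0 y = win0 y') (h2 : y (Fin.last m) = y' (Fin.last m)) : y = y' := by
  funext i
  by_cases hi : i.1 < m
  · have := congrFun h1 ⟨i.1, hi⟩
    simpa [win0, Fin.eta] using this
  · have him : i = Fin.last m := Fin.ext (by
      have := i.2; simp only [Fin.val_last]; omega)
    rw [him]; exact h2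

lemma win1_pair_inj {q m : ℕ} {y y' : Fin (m+1) → ZMod q}
    (h1 : win1 y = win1 y') (h2 : y 0 = y' 0) : y = y' := by
  funext i
  by_cases hi : 0 < i.1
  · have hj : i.1 - 1 < m := by have := i.2; omega
    have := congrFun h1 ⟨i.1 - 1, hj⟩
    have heq : (⟨(i.1 - 1) + 1, by omega⟩ : Fin (m+1)) = i := Fin.ext (by simp; omega)
    simpa [win1, heq] using this
  · have hiv : i.1 = 0 := by omega
    have hi0 : i = 0 := Fin.ext (by simp [hiv])
    rw [hi0]; exact h2

lemma zmod_sum_val (q : ℕ) [NeZero q] (f : ℕ → ℝ) :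
    ∑ v : ZMod q, f (ZMod.val v) = ∑ k ∈ Finset.range q, f k := by
  apply Finset.sum_nbij' (i := fun v => ZMod.val v) (j := fun k => (k : ZMod q))
  · intro a _; exact Finset.mem_range.2 (ZMod.val_lt a)
  · intro a _; exact Finset.mem_univ _
  · intro a _; exact ZMod.natCast_rightInverse a
  · intro a ha; exact ZMod.val_cast_of_lt (Finset.mem_range.1 ha)
  · intro a _; rfl
lemma mgf_one (q : ℕ) [NeZero q] (hq : 2 ≤ q) (t : ℝ) :
    ∑ v : ZMod q, Real.exp (t * ((ZMod.val v : ℝ) - ((q:ℝ)-1)/2))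
      ≤ q * Real.exp (t^2 * ((q:ℝ)-1)^2 / 8) := by
  set μ : ℝ := ((q:ℝ)-1)/2 with hμ
  have hq1 : (1:ℝ) ≤ (q:ℝ) := by exact_mod_cast Nat.one_le_of_lt hq
  have hμ0 : 0 ≤ μ := by rw [hμ]; linarith
  have hsum : ∑ v : ZMod q, Real.exp (t * ((ZMod.val v : ℝ) - μ))
      = ∑ k ∈ Finset.range q, Real.exp (t * ((k : ℝ) - μ)) :=
    zmod_sum_val q (fun k => Real.exp (t * ((k:ℝ) - μ)))
  rw [hsum]
  have hrefl : ∑ k ∈ Finset.range q, Real.exp (t * ((k : ℝ) - μ))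
      = ∑ k ∈ Finset.range q, Real.exp (- (t * ((k : ℝ) - μ))) := by
    rw [← Finset.sum_range_reflect]
    apply Finset.sum_congr rfl
    intro k hk
    have hk' : k < q := Finset.mem_range.1 hk
    have hc : ((q - 1 - k : ℕ) : ℝ) = (q : ℝ) - 1 - k := by
      have h1 : (1:ℕ) ≤ q := by omega
      have h2 : k ≤ q - 1 := by omega
      push_cast [Nat.cast_sub h2, Nat.cast_sub h1]
      ring
    rw [hc]
    congr 1
    rw [hμ]; ring
  have h2 : (2:ℝ) * ∑ k ∈ Finset.range q, Real.exp (t * ((k : ℝ) - μ))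
      = ∑ k ∈ Finset.range q, 2 * Real.cosh (t * ((k : ℝ) - μ)) := by
    rw [two_mul]
    nth_rewrite 2 [hrefl]
    rw [← Finset.sum_add_distrib]
    apply Finset.sum_congr rfl
    intro k _
    rw [Real.cosh_eq, Real.exp_neg]
    field_simp
  have hbnd : ∀ k ∈ Finset.range q, 2 * Real.cosh (t * ((k : ℝ) - μ))
      ≤ 2 * Real.exp (t^2 * ((q:ℝ)-1)^2 / 8) := by
    intro k hk
    have hk' : (k:ℝ) ≤ (q:ℝ) - 1 := by
      have := Finset.mem_range.1 hk
      have : (k:ℝ) < (q:ℝ) := by exact_mod_cast this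
      have hkq : k < q := Finset.mem_range.1 hk
      have : (k:ℝ) ≤ (q:ℝ) - 1 := by
        have : (k+1 : ℕ) ≤ q := hkq
        have : ((k+1 : ℕ):ℝ) ≤ (q:ℝ) := by exact_mod_cast this
        push_cast at this; linarith
      exact this
    have hk0 : (0:ℝ) ≤ (k:ℝ) := Nat.cast_nonneg k
    have h1 : Real.cosh (t * ((k : ℝ) - μ)) ≤ Real.cosh (t * μ) := by
      rw [Real.cosh_le_cosh, abs_mul, abs_mul]
      apply mul_le_mul_of_nonneg_left _ (abs_nonneg t)
      rw [abs_of_nonneg hμ0, abs_le, hμ]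
      constructor <;> linarith
    have h2 : Real.cosh (t * μ) ≤ Real.exp ((t*μ)^2/2) := Real.cosh_le_exp_half_sq _
    have h3 : (t*μ)^2/2 = t^2 * ((q:ℝ)-1)^2 / 8 := by rw [hμ]; ring
    rw [h3] at h2
    linarith
  have := Finset.sum_le_sum hbnd
  rw [← h2] at this
  simp only [Finset.sum_const, Finset.card_range, nsmul_eq_mul] at this
  linarith
lemma chernoff (q n : ℕ) [NeZero q] (hq : 2 ≤ q) (t θ : ℝ)
    (s : Finset (Fin n → ZMod q)) (hs : ∀ x ∈ s, θ ≤ t * (Swt x : ℝ)) :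
    (s.card : ℝ) ≤ (q:ℝ)^n *
      Real.exp ((n:ℝ) * (t*(((q:ℝ)-1)/2) + t^2*((q:ℝ)-1)^2/8) - θ) := by
  set μ : ℝ := ((q:ℝ)-1)/2 with hμ
  set A : ℝ := t*μ + t^2*((q:ℝ)-1)^2/8 with hA
  have h1 : (s.card : ℝ) * Real.exp θ ≤ ∑ x ∈ s, Real.exp (t * (Swt x:ℝ)) := by
    have := Finset.card_nsmul_le_sum s (fun x => Real.exp (t * (Swt x:ℝ)))
      (Real.exp θ) (fun x hx => Real.exp_le_exp.2 (hs x hx))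
    simpa [nsmul_eq_mul] using this
  have h2 : ∑ x ∈ s, Real.exp (t * (Swt x:ℝ))
      ≤ ∑ x : Fin n → ZMod q, Real.exp (t * (Swt x:ℝ)) :=
    Finset.sum_le_sum_of_subset_of_nonneg (Finset.subset_univ s)
      (fun x _ _ => (Real.exp_pos _).le)
  have h3 : ∑ x : Fin n → ZMod q, Real.exp (t * (Swt x:ℝ))
      = (∑ v : ZMod q, Real.exp (t * (ZMod.val v : ℝ)))^n := by
    have he : ∀ x : Fin n → ZMod q, Real.exp (t * (Swt x:ℝ))
        = ∏ i : Fin n, Real.exp (t * ((ZMod.val (x i) : ℕ) : ℝ)) := by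
      intro x
      rw [← Real.exp_sum]
      congr 1
      rw [Swt]
      push_cast
      rw [Finset.mul_sum]
    simp_rw [he]
    have hp := Finset.prod_univ_sum (fun _ : Fin n => (Finset.univ : Finset (ZMod q)))
      (fun _ v => Real.exp (t * (ZMod.val v : ℝ)))
    rw [Fintype.piFinset_univ] at hp
    rw [← hp, Finset.prod_const, Finset.card_univ, Fintype.card_fin]
  have h4 : ∑ v : ZMod q, Real.exp (t * (ZMod.val v : ℝ)) ≤ q * Real.exp A := by
    have hsplit : ∀ v : ZMod q, Real.exp (t * (ZMod.val v : ℝ))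
        = Real.exp (t*μ) * Real.exp (t * ((ZMod.val v : ℝ) - μ)) := by
      intro v; rw [← Real.exp_add]; congr 1; ring
    simp_rw [hsplit, ← Finset.mul_sum]
    calc Real.exp (t*μ) * ∑ v : ZMod q, Real.exp (t * ((ZMod.val v : ℝ) - μ))
        ≤ Real.exp (t*μ) * (q * Real.exp (t^2 * ((q:ℝ)-1)^2 / 8)) :=
          mul_le_mul_of_nonneg_left (mgf_one q hq t) (Real.exp_pos _).le
      _ = q * Real.exp A := by rw [hA, Real.exp_add]; ring
  have h5 : (∑ v : ZMod q, Real.exp (t * (ZMod.val v : ℝ)))^n ≤ ((q:ℝ) * Real.exp A)^n := by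
    apply pow_le_pow_left₀ _ h4
    positivity
  have h6 : ((q:ℝ) * Real.exp A)^n = (q:ℝ)^n * Real.exp ((n:ℝ) * A) := by
    rw [mul_pow, ← Real.exp_nat_mul]
  have h7 : (s.card : ℝ) * Real.exp θ ≤ (q:ℝ)^n * Real.exp ((n:ℝ) * A) := by
    calc (s.card : ℝ) * Real.exp θ ≤ _ := h1
      _ ≤ _ := h2
      _ = _ := h3
      _ ≤ _ := h5
      _ = _ := h6
  have hexp : Real.exp ((n:ℝ) * A - θ) = Real.exp ((n:ℝ)*A) * (Real.exp θ)⁻¹ := by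
    rw [Real.exp_sub]; ring
  rw [hexp, ← mul_assoc]
  have hθ := Real.exp_pos θ
  calc (s.card:ℝ) = (s.card:ℝ) * Real.exp θ * (Real.exp θ)⁻¹ := by
        field_simp
    _ ≤ (q:ℝ)^n * Real.exp ((n:ℝ)*A) * (Real.exp θ)⁻¹ :=
        mul_le_mul_of_nonneg_right h7 (inv_nonneg.2 hθ.le)

lemma count_bad (q n : ℕ) [NeZero q] (hq : 2 ≤ q) (ε : ℝ) (hε : 0 < ε)
    (s : Finset (Fin n → ZMod q))
    (hs : ∀ x ∈ s, ¬((((q:ℝ)-1)/2 - ε) * n ≤ (Swt x:ℝ) ∧ (Swt x:ℝ) ≤ (((q:ℝ)-1)/2 + ε) * n)) :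
    (s.card : ℝ) ≤ 2 * (q:ℝ)^n * Real.exp (-(2*ε^2*(n:ℝ)) / ((q:ℝ)-1)^2) := by
  classical
  set μ : ℝ := ((q:ℝ)-1)/2 with hμ
  set Δ : ℝ := (q:ℝ)-1 with hΔdef
  have hΔ : (1:ℝ) ≤ Δ := by
    rw [hΔdef]
    have : (2:ℝ) ≤ (q:ℝ) := by exact_mod_cast hq
    linarith
  have hΔ0 : (0:ℝ) < Δ := by linarith
  set lowS := s.filter (fun x => (Swt x:ℝ) < (μ - ε) * n) with hlowS
  set highS := s.filter (fun x => ¬ ((Swt x:ℝ) < (μ - ε) * n)) with hhighS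
  have hcard : s.card = lowS.card + highS.card :=
    (Finset.card_filter_add_card_filter_not _).symm
  -- low tail
  have hlow : (lowS.card : ℝ) ≤ (q:ℝ)^n * Real.exp (-(2*ε^2*(n:ℝ)) / Δ^2) := by
    set t : ℝ := -(4*ε/Δ^2) with ht
    have hch := chernoff q n hq t (t * ((μ - ε) * n)) lowS ?_
    · refine le_trans hch (le_of_eq ?_)
      congr 2
      rw [ht, hμ, hΔdef]
      have hq1 : (q:ℝ) - 1 ≠ 0 := by rw [← hΔdef]; exact hΔ0.ne'
      field_simp
      ring
    · intro x hx
      have hxs := Finset.mem_filter.1 hx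
      have h1 : (Swt x : ℝ) ≤ (μ - ε) * n := (hxs.2).le
      have ht0 : t ≤ 0 := by
        rw [ht]; exact neg_nonpos.2 (by positivity)
      exact mul_le_mul_of_nonpos_left h1 ht0
  -- high tail
  have hhigh : (highS.card : ℝ) ≤ (q:ℝ)^n * Real.exp (-(2*ε^2*(n:ℝ)) / Δ^2) := by
    set t : ℝ := 4*ε/Δ^2 with ht
    have hch := chernoff q n hq t (t * ((μ + ε) * n)) highS ?_
    · refine le_trans hch (le_of_eq ?_)
      congr 2
      rw [ht, hμ, hΔdef]
      have hq1 : (q:ℝ) - 1 ≠ 0 := by rw [← hΔdef]; exact hΔ0.ne'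
      field_simp
      ring
    · intro x hx
      have hxs := Finset.mem_filter.1 hx
      have h2 : (μ + ε) * n ≤ (Swt x : ℝ) := by
        have hnb := hs x hxs.1
        push_neg at hnb
        by_cases hcase : (μ - ε) * n ≤ (Swt x : ℝ)
        · exact (hnb hcase).le
        · exact absurd (lt_of_not_ge hcase) hxs.2
      have ht0 : 0 ≤ t := by rw [ht]; positivity
      exact mul_le_mul_of_nonneg_left h2 ht0
  push_cast [hcard]
  rw [hΔdef] at hlow hhigh
  linarith
lemma no_small (x : ℝ) (h2 : 0 < x) (hx : Real.log x < x/4) (k : ℕ)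
    (hk : x = (k:ℝ)) (hbig : (2.7182818286:ℝ)^k < x^4) : False := by
  have hxe : x < Real.exp (x/4) := by
    calc x = Real.exp (Real.log x) := (Real.exp_log h2).symm
      _ < Real.exp (x/4) := Real.exp_lt_exp.2 hx
  have h4 : x^4 < Real.exp (x/4)^4 := by
    apply pow_lt_pow_left₀ hxe h2.le
    norm_num
  have h5 : Real.exp (x/4)^4 = Real.exp x := by
    rw [← Real.exp_nat_mul]
    norm_num
    ring_nf
  have h6 : Real.exp x ≤ (2.7182818286:ℝ)^k := by
    rw [hk, ← Real.exp_one_pow]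
    exact pow_le_pow_left₀ (Real.exp_pos 1).le Real.exp_one_lt_d9.le k
  linarith

lemma quartic_bound (q : ℕ) (hq : 2 ≤ q) (x : ℝ) (hx9 : (9:ℝ) ≤ x)
    (hxq : 2*(q:ℝ)^2 - 3 ≤ x) : 4*(q:ℝ)^4 ≤ x^2 + 8*x := by
  by_cases hq3 : 3 ≤ q
  · have h3 : (3:ℝ) ≤ (q:ℝ) := by exact_mod_cast hq3
    have hb : (0:ℝ) ≤ 2*(q:ℝ)^2 - 3 := by nlinarith
    have hxx : (2*(q:ℝ)^2-3)^2 ≤ x^2 := by nlinarith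
    nlinarith [hxx, hxq, hb]
  · have hq2' : q = 2 := by omega
    rw [hq2']
    push_cast
    nlinarith [hx9, sq_nonneg (x-9)]

set_option maxHeartbeats 1000000 in
lemma analytic (q : ℕ) (hq : 2 ≤ q) (ε₀ : ℝ) (hε0 : 0 < ε₀) (hε : ε₀ < ((q:ℝ)-1)/2)
    (m : ℕ) (hm1 : 2*q^2 - 1 ≤ m)
    (hm2 : ((q:ℝ)-1)^2/ε₀^2 * Real.log ((m:ℝ)-2) + 2 ≤ (m:ℝ)) :
    4*(q:ℝ)^4 ≤ Real.exp (2*ε₀^2*(m:ℝ)/((q:ℝ)-1)^2) ∧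
    (81:ℝ) ≤ Real.exp (2*ε₀^2*((m:ℝ)-2)/((q:ℝ)-1)^2) := by
  have hq2 : (2:ℝ) ≤ (q:ℝ) := by exact_mod_cast hq
  obtain ⟨Δ, hΔdef⟩ : ∃ d : ℝ, d = (q:ℝ)-1 := ⟨_, rfl⟩
  rw [← hΔdef] at hm2 hε
  have hΔ : (1:ℝ) ≤ Δ := by rw [hΔdef]; linarith
  have hΔ0 : (0:ℝ) < Δ := by linarith
  have hq2n : (1:ℕ) ≤ q^2 := Nat.one_le_pow _ _ (by omega)
  have hm7 : 7 ≤ m := by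
    have : (2:ℕ)^2 ≤ q^2 := Nat.pow_le_pow_left hq 2
    omega
  obtain ⟨x, hxdef⟩ : ∃ z : ℝ, z = (m:ℝ)-2 := ⟨_, rfl⟩
  rw [← hxdef] at hm2
  have hx5 : (5:ℝ) ≤ x := by
    rw [hxdef]
    have : (7:ℝ) ≤ (m:ℝ) := by exact_mod_cast hm7
    linarith
  have hxpos : (0:ℝ) < x := by linarith
  have hxq : 2*(q:ℝ)^2 - 3 ≤ x := by
    have h := (Nat.cast_le (α := ℝ)).2 hm1
    rw [Nat.cast_sub (by omega : 1 ≤ 2*q^2)] at h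
    push_cast at h
    rw [hxdef]; linarith
  obtain ⟨c, hcdef⟩ : ∃ c : ℝ, c = ε₀^2/Δ^2 := ⟨_, rfl⟩
  have hc0 : 0 < c := by rw [hcdef]; positivity
  have hc4 : c < 1/4 := by
    rw [hcdef, div_lt_iff₀ (by positivity)]
    nlinarith [hε, hε0, hΔ0]
  have hlog : Real.log x ≤ c * x := by
    have h1 : Δ^2/ε₀^2 * Real.log x ≤ x := by linarith [hm2, hxdef]
    have h2 : Δ^2/ε₀^2 * (c*x) = x := by
      rw [hcdef]; field_simp
    have h3 : Δ^2/ε₀^2 * Real.log x ≤ Δ^2/ε₀^2 * (c*x) := by rw [h2]; exact h1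
    exact le_of_mul_le_mul_left h3 (by positivity)
  have hx9 : (9:ℝ) ≤ x := by
    by_cases hq3 : 3 ≤ q
    · have : (3:ℝ) ≤ (q:ℝ) := by exact_mod_cast hq3
      nlinarith
    · have hq2' : q = 2 := by omega
      subst hq2'
      by_contra hcon
      push_neg at hcon
      have hm10 : m ≤ 10 := by
        by_contra hm11
        push_neg at hm11
        have : (11:ℝ) ≤ (m:ℝ) := by exact_mod_cast hm11
        rw [hxdef] at hcon; linarith
      have hlt : Real.log x < x/4 := by
        calc Real.log x ≤ c * x := hlog
          _ < (1/4) * x := by nlinarith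
          _ = x/4 := by ring
      interval_cases m
      · exact no_small x hxpos hlt 5 (by rw [hxdef]; norm_num) (by rw [hxdef]; norm_num)
      · exact no_small x hxpos hlt 6 (by rw [hxdef]; norm_num) (by rw [hxdef]; norm_num)
      · exact no_small x hxpos hlt 7 (by rw [hxdef]; norm_num) (by rw [hxdef]; norm_num)
      · exact no_small x hxpos hlt 8 (by rw [hxdef]; norm_num) (by rw [hxdef]; norm_num)
  have hexp2 : Real.exp 2 < 9 := by
    have h := Real.exp_one_lt_d9
    have h2 : Real.exp 2 = Real.exp 1 * Real.exp 1 := by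
      rw [← Real.exp_add]; norm_num
    nlinarith [Real.exp_pos 1]
  have hlog2 : (2:ℝ) ≤ Real.log x := by
    rw [Real.le_log_iff_exp_le hxpos]
    linarith
  have hxe : x ≤ Real.exp (c*x) := by
    calc x = Real.exp (Real.log x) := (Real.exp_log hxpos).symm
      _ ≤ Real.exp (c*x) := Real.exp_le_exp.2 hlog
  -- main: x^2 + 8x ≤ exp (2c(x+2))
  have hmain : x^2 + 8*x ≤ Real.exp (2*c*(x+2)) := by
    have hx0 : x ≠ 0 := ne_of_gt hxpos
    have hp0 : (0:ℝ) ≤ 2 + 4/x := by positivity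
    have hmul : 2*c*(x+2) = (c*x) * (2 + 4/x) := by field_simp; ring
    rw [hmul, Real.exp_mul]
    have h1 : x ^ (2 + 4/x : ℝ) ≤ Real.exp (c*x) ^ (2 + 4/x : ℝ) :=
      Real.rpow_le_rpow hxpos.le hxe hp0
    refine le_trans ?_ h1
    rw [Real.rpow_add hxpos, Real.rpow_def_of_pos hxpos (4/x)]
    set L : ℝ := Real.log x * (4/x) with hLdef
    have h2 : 1 + L ≤ Real.exp L := by
      linarith [Real.add_one_le_exp L]
    have h3 : (1:ℝ) + 8/x ≤ 1 + L := by
      have h0 : (4/x) * 2 ≤ (4/x) * Real.log x :=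
        mul_le_mul_of_nonneg_left hlog2 (by positivity)
      have h8 : (8:ℝ)/x = (4/x)*2 := by ring
      have hL' : L = (4/x) * Real.log x := by rw [hLdef]; ring
      linarith
    have h4 : x ^ ((2:ℝ)) = x^(2:ℕ) := by
      rw [show ((2:ℝ)) = ((2:ℕ):ℝ) by norm_num, Real.rpow_natCast]
    calc x^2 + 8*x = x^(2:ℕ) * (1 + 8/x) := by field_simp
      _ = x ^ ((2:ℝ)) * (1 + 8/x) := by rw [h4]
      _ ≤ x ^ ((2:ℝ)) * (1 + L) := by
          apply mul_le_mul_of_nonneg_left h3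
          positivity
      _ ≤ x ^ ((2:ℝ)) * Real.exp L := by
          apply mul_le_mul_of_nonneg_left h2
          positivity
  have hq4 : 4*(q:ℝ)^4 ≤ x^2 + 8*x := quartic_bound q hq x hx9 hxq
  constructor
  · have hx2 : x + 2 = (m:ℝ) := by rw [hxdef]; ring
    have hcm : 2*ε₀^2*(m:ℝ)/((q:ℝ)-1)^2 = 2*c*(x+2) := by
      rw [hx2, hcdef, hΔdef]; ring
    rw [hcm]
    linarith
  · have hcx : 2*ε₀^2*((m:ℝ)-2)/((q:ℝ)-1)^2 = 2*(c*x) := by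
      rw [hcdef, ← hxdef, hΔdef]; ring
    rw [hcx]
    have h1 : Real.exp (2*Real.log x) ≤ Real.exp (2*(c*x)) :=
      Real.exp_le_exp.2 (by linarith [hlog])
    have h2 : Real.exp (2*Real.log x) = x^2 := by
      rw [two_mul, Real.exp_add, Real.exp_log hxpos]; ring
    have h3 : (81:ℝ) ≤ x^2 := by nlinarith [hx9]
    linarith

set_option maxHeartbeats 1000000 in
theorem stmt19 (q : ℕ) (hq : 2 ≤ q) (ε₀ : ℝ) (hε0 : 0 < ε₀) (hε : ε₀ < ((q : ℝ) - 1) / 2)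
    (m : ℕ) (hm1 : 2 * q ^ 2 - 1 ≤ m)
    (hm2 : ((q : ℝ) - 1) ^ 2 / ε₀ ^ 2 * Real.log ((m : ℝ) - 2) + 2 ≤ (m : ℝ)) :
    Nat.card (Gset q m ε₀) ≤ q ^ (m - 3) ∧
    ∃ f : Gset q m ε₀ →
        Wset q (m - 2) (m - 2)
          ((((q : ℝ) - 1) / 2 - ε₀) * ((m - 2 : ℕ) : ℝ))
          ((((q : ℝ) - 1) / 2 + ε₀) * ((m - 2 : ℕ) : ℝ)),
      Function.Injective f := by
  classical
  haveI : NeZero q := ⟨by omega⟩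
  have hq2ℝ : (2:ℝ) ≤ (q:ℝ) := by exact_mod_cast hq
  have hq0ℝ : (0:ℝ) < (q:ℝ) := by linarith
  have hm7 : 7 ≤ m := by
    have : (2:ℕ)^2 ≤ q^2 := Nat.pow_le_pow_left hq 2
    omega
  obtain ⟨h4q, h81⟩ := analytic q hq ε₀ hε0 hε m hm1 hm2
  -- the bad set for full strings of length m
  set BadM : Finset (Fin m → ZMod q) :=
    Finset.univ.filter (fun x => ¬((((q:ℝ)-1)/2 - ε₀) * (m:ℝ) ≤ (Swt x : ℝ) ∧
      (Swt x : ℝ) ≤ (((q:ℝ)-1)/2 + ε₀) * (m:ℝ))) with hBadMdef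
  have hBadM : (BadM.card : ℝ) ≤ 2*(q:ℝ)^m * Real.exp (-(2*ε₀^2*(m:ℝ)) / ((q:ℝ)-1)^2) :=
    count_bad q m hq ε₀ hε0 BadM (fun x hx => (Finset.mem_filter.1 hx).2)
  -- G is covered by two window-bad sets
  set G0 : Finset (Fin (m+1) → ZMod q) :=
    Finset.univ.filter (fun y => win0 y ∈ BadM) with hG0def
  set G1 : Finset (Fin (m+1) → ZMod q) :=
    Finset.univ.filter (fun y => win1 y ∈ BadM) with hG1def
  set GF : Finset (Fin (m+1) → ZMod q) :=
    Finset.univ.filter (fun y => y ∈ Gset q m ε₀) with hGFdef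
  have hGsub : GF ⊆ G0 ∪ G1 := by
    intro y hy
    have hyG : y ∈ Gset q m ε₀ := (Finset.mem_filter.1 hy).2
    obtain ⟨a, ha, hbad⟩ := hyG
    have ha01 : a = 0 ∨ a = 1 := by omega
    rcases ha01 with rfl | rfl
    · apply Finset.mem_union_left
      refine Finset.mem_filter.2 ⟨Finset.mem_univ _, ?_⟩
      refine Finset.mem_filter.2 ⟨Finset.mem_univ _, ?_⟩
      rw [← wsub_eq_win0 y ha]
      exact hbad
    · apply Finset.mem_union_right
      refine Finset.mem_filter.2 ⟨Finset.mem_univ _, ?_⟩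
      refine Finset.mem_filter.2 ⟨Finset.mem_univ _, ?_⟩
      rw [← wsub_eq_win1 y ha]
      exact hbad
  have hG0card : G0.card ≤ BadM.card * q := by
    have h := Finset.card_le_card_of_injOn
      (f := fun y => (win0 y, y (Fin.last m)))
      (s := G0) (t := BadM ×ˢ (Finset.univ : Finset (ZMod q)))
      (fun y hy => Finset.mem_product.2 ⟨(Finset.mem_filter.1 hy).2, Finset.mem_univ _⟩)
      (fun y _ y' _ hyy => by
        have h1 : win0 y = win0 y' := congrArg Prod.fst hyy
        have h2 : y (Fin.last m) = y' (Fin.last m) := congrArg Prod.snd hyy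
        exact win0_pair_inj h1 h2)
    rw [Finset.card_product] at h
    simpa [Finset.card_univ, ZMod.card] using h
  have hG1card : G1.card ≤ BadM.card * q := by
    have h := Finset.card_le_card_of_injOn
      (f := fun y => (win1 y, y 0))
      (s := G1) (t := BadM ×ˢ (Finset.univ : Finset (ZMod q)))
      (fun y hy => Finset.mem_product.2 ⟨(Finset.mem_filter.1 hy).2, Finset.mem_univ _⟩)
      (fun y _ y' _ hyy => by
        have h1 : win1 y = win1 y' := congrArg Prod.fst hyy
        have h2 : y 0 = y' 0 := congrArg Prod.snd hyy
        exact win1_pair_inj h1 h2)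
    rw [Finset.card_product] at h
    simpa [Finset.card_univ, ZMod.card] using h
  have hGFnat : GF.card ≤ 2 * (BadM.card * q) := by
    calc GF.card ≤ (G0 ∪ G1).card := Finset.card_le_card hGsub
      _ ≤ G0.card + G1.card := Finset.card_union_le _ _
      _ ≤ 2 * (BadM.card * q) := by omega
  -- real-number bound on GF.card
  have hGFreal : (GF.card : ℝ) ≤ ((q:ℕ)^(m-3) : ℕ) := by
    have hE : Real.exp (-(2*ε₀^2*(m:ℝ)) / ((q:ℝ)-1)^2)
        ≤ (4*(q:ℝ)^4)⁻¹ := by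
      have hne : -(2*ε₀^2*(m:ℝ)) / ((q:ℝ)-1)^2 = -(2*ε₀^2*(m:ℝ) / ((q:ℝ)-1)^2) := by
        ring
      rw [hne, Real.exp_neg]
      exact inv_anti₀ (by positivity) h4q
    have h1 : (GF.card : ℝ) ≤ 2 * ((BadM.card:ℝ) * q) := by
      exact_mod_cast hGFnat
    have h2 : (GF.card : ℝ) ≤ 2 * (2*(q:ℝ)^m * Real.exp (-(2*ε₀^2*(m:ℝ)) / ((q:ℝ)-1)^2) * q) := by
      have := mul_le_mul_of_nonneg_right hBadM (le_of_lt hq0ℝ)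
      nlinarith [hBadM, hq0ℝ, Real.exp_pos (-(2*ε₀^2*(m:ℝ)) / ((q:ℝ)-1)^2)]
    have h3 : (GF.card : ℝ) ≤ 4*(q:ℝ)^(m+1) * (4*(q:ℝ)^4)⁻¹ := by
      have hpow : (q:ℝ)^(m+1) = (q:ℝ)^m * q := by rw [pow_succ]
      calc (GF.card : ℝ) ≤ 2 * (2*(q:ℝ)^m * Real.exp (-(2*ε₀^2*(m:ℝ)) / ((q:ℝ)-1)^2) * q) := h2
        _ = 4*(q:ℝ)^(m+1) * Real.exp (-(2*ε₀^2*(m:ℝ)) / ((q:ℝ)-1)^2) := by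
            rw [hpow]; ring
        _ ≤ 4*(q:ℝ)^(m+1) * (4*(q:ℝ)^4)⁻¹ := by
            apply mul_le_mul_of_nonneg_left hE
            positivity
    have hqpow : (q:ℝ)^(m+1) = (q:ℝ)^(m-3) * (q:ℝ)^4 := by
      rw [← pow_add]
      congr 1
      omega
    have h4 : 4*(q:ℝ)^(m+1) * (4*(q:ℝ)^4)⁻¹ = (q:ℝ)^(m-3) := by
      rw [hqpow]
      field_simp
    rw [h4] at h3
    push_cast
    exact h3
  have hGFcard : GF.card ≤ q^(m-3) := by exact_mod_cast hGFreal
  have hGnat : Nat.card (Gset q m ε₀) = GF.card := by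
    have hset : Gset q m ε₀ = ↑GF := by
      ext y
      simp [hGFdef]
    rw [hset, Nat.card_coe_set_eq, Set.ncard_coe_finset]
  -- W side
  set BadW : Finset (Fin (m-2) → ZMod q) :=
    Finset.univ.filter (fun x => ¬((((q:ℝ)-1)/2 - ε₀) * ((m-2:ℕ):ℝ) ≤ (Swt x : ℝ) ∧
      (Swt x : ℝ) ≤ (((q:ℝ)-1)/2 + ε₀) * ((m-2:ℕ):ℝ))) with hBadWdef
  have hBadW : (BadW.card : ℝ)
      ≤ 2*(q:ℝ)^(m-2) * Real.exp (-(2*ε₀^2*((m-2:ℕ):ℝ)) / ((q:ℝ)-1)^2) :=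
    count_bad q (m-2) hq ε₀ hε0 BadW (fun x hx => (Finset.mem_filter.1 hx).2)
  have hcast : ((m-2:ℕ):ℝ) = (m:ℝ) - 2 := by
    rw [Nat.cast_sub (by omega)]
    norm_num
  have hEW : Real.exp (-(2*ε₀^2*((m-2:ℕ):ℝ)) / ((q:ℝ)-1)^2) ≤ (81:ℝ)⁻¹ := by
    have hne : -(2*ε₀^2*((m-2:ℕ):ℝ)) / ((q:ℝ)-1)^2
        = -(2*ε₀^2*((m:ℝ)-2) / ((q:ℝ)-1)^2) := by
      rw [hcast]; ring
    rw [hne, Real.exp_neg]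
    exact inv_anti₀ (by norm_num) h81
  have hBadWreal : (BadW.card : ℝ) ≤ 2*(q:ℝ)^(m-2) / 81 := by
    calc (BadW.card : ℝ) ≤ 2*(q:ℝ)^(m-2) * Real.exp (-(2*ε₀^2*((m-2:ℕ):ℝ)) / ((q:ℝ)-1)^2) := hBadW
      _ ≤ 2*(q:ℝ)^(m-2) * (81:ℝ)⁻¹ := by
          apply mul_le_mul_of_nonneg_left hEW
          positivity
      _ = 2*(q:ℝ)^(m-2) / 81 := by ring
  have hpow2 : (q:ℝ)^(m-2) = (q:ℝ)^(m-3) * q := by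
    rw [← pow_succ]
    congr 1
    omega
  have hBadWbound : (BadW.card : ℝ) + ((q:ℕ)^(m-3) : ℕ) ≤ ((q:ℕ)^(m-2) : ℕ) := by
    push_cast
    have : 2*(q:ℝ)^(m-2) / 81 + (q:ℝ)^(m-3) ≤ (q:ℝ)^(m-2) := by
      rw [hpow2]
      have hq3 : (0:ℝ) < (q:ℝ)^(m-3) := by positivity
      nlinarith [hq3, hq2ℝ]
    linarith [hBadWreal]
  have hBadWnat : BadW.card + q^(m-3) ≤ q^(m-2) := by exact_mod_cast hBadWbound
  -- Wset is the complement of BadW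
  have hWmem : ∀ z : Fin (m-2) → ZMod q,
      z ∈ Wset q (m-2) (m-2)
        ((((q:ℝ)-1)/2 - ε₀) * ((m-2:ℕ):ℝ)) ((((q:ℝ)-1)/2 + ε₀) * ((m-2:ℕ):ℝ))
      ↔ z ∉ BadW := by
    intro z
    simp only [hBadWdef, Finset.mem_filter, Finset.mem_univ, true_and, not_not]
    constructor
    · intro hz
      have h := hz 0 (by omega)
      rwa [wsub_zero_full z (by omega : 0 + (m-2) ≤ m-2)] at h
    · intro hb a h
      have ha : a = 0 := by omega
      subst ha
      rw [wsub_zero_full z h]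
      exact hb
  set WF : Finset (Fin (m-2) → ZMod q) :=
    Finset.univ.filter (fun z => z ∈ Wset q (m-2) (m-2)
      ((((q:ℝ)-1)/2 - ε₀) * ((m-2:ℕ):ℝ)) ((((q:ℝ)-1)/2 + ε₀) * ((m-2:ℕ):ℝ))) with hWFdef
  have hWFeq : WF = BadWᶜ := by
    ext z
    simp only [hWFdef, Finset.mem_filter, Finset.mem_univ, true_and, Finset.mem_compl]
    exact hWmem z
  have hWFcard : WF.card = q^(m-2) - BadW.card := by
    rw [hWFeq, Finset.card_compl]
    congr 1
    rw [Fintype.card_fun, Fintype.card_fin, ZMod.card]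
  have hWFge : q^(m-3) ≤ WF.card := by omega
  -- conclude
  have hWset : Wset q (m-2) (m-2)
      ((((q:ℝ)-1)/2 - ε₀) * ((m-2:ℕ):ℝ)) ((((q:ℝ)-1)/2 + ε₀) * ((m-2:ℕ):ℝ)) = ↑WF := by
    ext z
    simp [hWFdef]
  have hWnat : Nat.card (Wset q (m-2) (m-2)
      ((((q:ℝ)-1)/2 - ε₀) * ((m-2:ℕ):ℝ)) ((((q:ℝ)-1)/2 + ε₀) * ((m-2:ℕ):ℝ))) = WF.card := by
    rw [hWset, Nat.card_coe_set_eq, Set.ncard_coe_finset]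
  constructor
  · rw [hGnat]; exact hGFcard
  · haveI : Fintype ↥(Gset q m ε₀) := Fintype.ofFinite _
    haveI : Fintype ↥(Wset q (m-2) (m-2)
      ((((q:ℝ)-1)/2 - ε₀) * ((m-2:ℕ):ℝ)) ((((q:ℝ)-1)/2 + ε₀) * ((m-2:ℕ):ℝ))) :=
      Fintype.ofFinite _
    have hcards : Fintype.card ↥(Gset q m ε₀) ≤ Fintype.card ↥(Wset q (m-2) (m-2)
        ((((q:ℝ)-1)/2 - ε₀) * ((m-2:ℕ):ℝ)) ((((q:ℝ)-1)/2 + ε₀) * ((m-2:ℕ):ℝ))) := by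
      rw [← Nat.card_eq_fintype_card, ← Nat.card_eq_fintype_card, hGnat, hWnat]
      omega
    obtain ⟨f⟩ := Function.Embedding.nonempty_of_card_le hcards
    exact ⟨f, f.injective⟩
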